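/- The binary operation T on [0,1] defined by T(x,y) = 0 if x,y ∈ [0,1/2), T(x,y) = x + y - xy if x,y ∈ [1/2,1], and T(x,y) = max{x,y} otherwise, is associative. -/
import Mathlib


open Set ENNReal

/-- Pseudo-inverse of `f : [0,1] → [0,∞]`: `f⁻(y) = sup {x ∈ [0,1] | f x < y}` (with `sup ∅ = 0`). -/
noncomputable def pinv (f : unitInterval → ℝ≥0∞) (y : ℝ≥0∞) : unitInterval :=
  ⟨sSup {x : ℝ | ∃ hx : x ∈ unitInterval, f ⟨x, hx⟩ < y}, by
    set A : Set ℝ := {x : ℝ | ∃ hx : x ∈ unitInterval, f ⟨x, hx⟩ < y} with hA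
    have hsub : A ⊆ Set.Icc (0:ℝ) 1 := fun x hx => hx.choose
    rcases A.eq_empty_or_nonempty with h | h
    · rw [h, Real.sSup_empty]; exact ⟨le_refl 0, zero_le_one⟩
    · obtain ⟨a, ha⟩ := h
      exact ⟨le_trans (hsub ha).1 (le_csSup ⟨1, fun z hz => (hsub hz).2⟩ ha),
        csSup_le ⟨a, ha⟩ fun z hz => (hsub hz).2⟩⟩

/-- `G_M(x) = max (M ∩ {sup([0,x]∩M), inf([x,∞]∩M)})`. -/
noncomputable def GM (M : Set ℝ≥0∞) (x : ℝ≥0∞) : ℝ≥0∞ :=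
  sSup (M ∩ {sSup (M ∩ Set.Iic x), sInf (M ∩ Set.Ici x)})

/-- Right limit `f(x⁺)`, with convention `f(1⁺) = ∞`. -/
noncomputable def rlim (f : unitInterval → ℝ≥0∞) (x : unitInterval) : ℝ≥0∞ :=
  if (x : ℝ) = 1 then ⊤ else sInf {z | ∃ t : unitInterval, x < t ∧ f t = z}

/-- The defining condition of the class `𝓕`. -/
def ClassF (f : unitInterval → ℝ≥0∞) : Prop :=
  ∀ x : unitInterval,
    (rlim f x ∈ Set.range f → f x = rlim f x) ∧
    (rlim f x ∉ Set.range f → ∀ y : unitInterval, y ≠ x → f y ≠ f x)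

theorem stmt10 (T : ℝ → ℝ → ℝ)
    (hT : ∀ x y : ℝ, T x y =
      if x < 1/2 ∧ y < 1/2 then 0
      else if 1/2 ≤ x ∧ 1/2 ≤ y then x + y - x * y
      else max x y) :
    ∀ x ∈ Set.Icc (0:ℝ) 1, ∀ y ∈ Set.Icc (0:ℝ) 1, ∀ z ∈ Set.Icc (0:ℝ) 1,
      T (T x y) z = T x (T y z) := by
  have T00 : ∀ a b : ℝ, a < 1/2 → b < 1/2 → T a b = 0 := by
    intro a b ha hb; rw [hT, if_pos ⟨ha, hb⟩]
  have T11 : ∀ a b : ℝ, 1/2 ≤ a → 1/2 ≤ b → T a b = a + b - a * b := by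
    intro a b ha hb
    rw [hT, if_neg (by rintro ⟨h, _⟩; linarith), if_pos ⟨ha, hb⟩]
  have T10 : ∀ a b : ℝ, 1/2 ≤ a → b < 1/2 → T a b = a := by
    intro a b ha hb
    rw [hT, if_neg (by rintro ⟨h, _⟩; linarith), if_neg (by rintro ⟨_, h⟩; linarith)]
    exact max_eq_left (by linarith)
  have T01 : ∀ a b : ℝ, a < 1/2 → 1/2 ≤ b → T a b = b := by
    intro a b ha hb
    rw [hT, if_neg (by rintro ⟨_, h⟩; linarith), if_neg (by rintro ⟨h, _⟩; linarith)]
    exact max_eq_right (by linarith)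
  intro x hx y hy z hz
  obtain ⟨hx0, hx1⟩ := hx
  obtain ⟨hy0, hy1⟩ := hy
  obtain ⟨hz0, hz1⟩ := hz
  rcases lt_or_ge x (1/2) with hx2 | hx2 <;>
    rcases lt_or_ge y (1/2) with hy2 | hy2 <;>
      rcases lt_or_ge z (1/2) with hz2 | hz2
  · rw [T00 x y hx2 hy2, T00 y z hy2 hz2, T00 x 0 hx2 (by norm_num),
      T00 0 z (by norm_num) hz2]
  · rw [T00 x y hx2 hy2, T01 y z hy2 hz2, T01 x z hx2 hz2, T01 0 z (by norm_num) hz2]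
  · rw [T01 x y hx2 hy2, T10 y z hy2 hz2, T01 x y hx2 hy2]
  · have hs : 1/2 ≤ y + z - y * z := by nlinarith
    rw [T01 x y hx2 hy2, T11 y z hy2 hz2, T01 x _ hx2 hs]
  · rw [T10 x y hx2 hy2, T00 y z hy2 hz2, T10 x z hx2 hz2, T10 x 0 hx2 (by norm_num)]
  · rw [T10 x y hx2 hy2, T01 y z hy2 hz2]
  · have hs : 1/2 ≤ x + y - x * y := by nlinarith
    rw [T11 x y hx2 hy2, T10 y z hy2 hz2, T10 _ z hs hz2, T11 x y hx2 hy2]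
  · have hs1 : 1/2 ≤ x + y - x * y := by nlinarith
    have hs2 : 1/2 ≤ y + z - y * z := by nlinarith
    rw [T11 x y hx2 hy2, T11 y z hy2 hz2, T11 _ z hs1 hz2, T11 x _ hx2 hs2]
    ring
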